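/- Let (X,d) and (Λ,ρ) be compact metric spaces, ω : Λ × X → X continuous, Ω = Λ^ℕ with shift β, and Φ : Ω × X → Ω × X the skew product Φ(σ,x) = (β(σ), ω_{σ_1}(x)). Let ν be a β-invariant Borel probability measure on Ω with ν(F) = 1, where F = {σ : lim_n (1/n) Σ_{i=1}^n diam(ω_{σ_i} ∘ ⋯ ∘ ω_{σ_1}(X)) = 0}. If μ_1 and μ_2 are Φ-invariant Borel probability measures on Ω × X with π_*(μ_1) = π_*(μ_2) = ν, where π(σ,x) = σ, then μ_1 = μ_2. -/

import Mathlib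

open Metric Set Filter MeasureTheory

def fcomp {Λ X : Type*} (ω : Λ → X → X) (σ : ℕ → Λ) : ℕ → X → X
  | 0 => id
  | n + 1 => ω (σ n) ∘ fcomp ω σ n

def shift {Λ : Type*} (σ : ℕ → Λ) : ℕ → Λ := fun n => σ (n + 1)

/-- The skew product `Φ(σ, x) = (β(σ), ω_{σ_1}(x))`. -/
def skew {Λ X : Type*} (ω : Λ → X → X) (q : (ℕ → Λ) × X) : (ℕ → Λ) × X :=
  (shift q.1, ω (q.1 0) q.2)

def Fset {Λ X : Type*} [MetricSpace X] (ω : Λ → X → X) : Set (ℕ → Λ) :=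
  {σ | Tendsto (fun n : ℕ => ((n : ℝ))⁻¹ *
      ∑ i ∈ Finset.range n, Metric.diam (Set.range (fcomp ω σ (i + 1))))
    atTop (nhds 0)}

section aux

set_option linter.unusedSectionVars false

lemma mem_unif_prod {α β : Type*} [UniformSpace α] [UniformSpace β]
    {s : Set ((α × β) × (α × β))} (hs : s ∈ uniformity (α × β)) :
    ∃ u ∈ uniformity α, ∃ v ∈ uniformity β,
      ∀ a₁ b₁ a₂ b₂, (a₁, a₂) ∈ u → (b₁, b₂) ∈ v → (((a₁, b₁)), ((a₂, b₂))) ∈ s := by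
  rw [uniformity_prod] at hs
  rcases Filter.mem_inf_iff.mp hs with ⟨t₁, ht₁, t₂, ht₂, rfl⟩
  rcases Filter.mem_comap.mp ht₁ with ⟨u, hu, hu'⟩
  rcases Filter.mem_comap.mp ht₂ with ⟨v, hv, hv'⟩
  exact ⟨u, hu, v, hv, fun a₁ b₁ a₂ b₂ ha hb => ⟨hu' ha, hv' hb⟩⟩

variable {X Λ : Type*} [MetricSpace X] [CompactSpace X] [MetricSpace Λ] [CompactSpace Λ]
variable {ω : Λ → X → X}

lemma continuous_shift : Continuous (shift (Λ := Λ)) :=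
  continuous_pi fun n => continuous_apply (n + 1)

lemma continuous_fcomp (hω : Continuous fun q : Λ × X => ω q.1 q.2) (n : ℕ) :
    Continuous fun q : (ℕ → Λ) × X => fcomp ω q.1 n q.2 := by
  induction n with
  | zero => exact continuous_snd
  | succ n ih =>
    exact hω.comp ((((continuous_apply n).comp continuous_fst)).prodMk ih)

lemma continuous_skew (hω : Continuous fun q : Λ × X => ω q.1 q.2) :
    Continuous (skew ω) := by
  have h1 : Continuous fun q : (ℕ → Λ) × X => shift q.1 :=
    continuous_shift.comp continuous_fst
  have h2 : Continuous fun q : (ℕ → Λ) × X => ω (q.1 0) q.2 := by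
    have hp : Continuous fun q : (ℕ → Λ) × X => ((q.1 0), q.2) :=
      ((continuous_apply 0).comp continuous_fst).prodMk continuous_snd
    exact hω.comp hp
  exact h1.prodMk h2

lemma shift_iterate (σ : ℕ → Λ) (n k : ℕ) : (shift^[n] σ) k = σ (k + n) := by
  induction n generalizing σ k with
  | zero => rfl
  | succ n ih =>
    rw [Function.iterate_succ_apply, ih]
    show σ (k + n + 1) = σ (k + (n + 1))
    ring_nf

lemma skew_iterate (q : (ℕ → Λ) × X) (n : ℕ) :
    (skew ω)^[n] q = (shift^[n] q.1, fcomp ω q.1 n q.2) := by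
  induction n with
  | zero => rfl
  | succ n ih =>
    rw [Function.iterate_succ_apply', ih]
    show (shift (shift^[n] q.1), ω ((shift^[n] q.1) 0) (fcomp ω q.1 n q.2)) = _
    rw [shift_iterate, ← Function.iterate_succ_apply' shift]
    simp [fcomp]

lemma continuous_diam (hω : Continuous fun q : Λ × X => ω q.1 q.2) (n : ℕ) :
    Continuous fun σ : ℕ → Λ => Metric.diam (Set.range (fcomp ω σ n)) := by
  have hUC : UniformContinuous fun q : (ℕ → Λ) × X => fcomp ω q.1 n q.2 :=
    CompactSpace.uniformContinuous_of_continuous (continuous_fcomp hω n)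
  rw [continuous_iff_continuousAt]
  intro σ
  rw [ContinuousAt, Metric.tendsto_nhds]
  intro ε hε
  have hS : {p : X × X | dist p.1 p.2 < ε / 3} ∈ uniformity X :=
    Metric.dist_mem_uniformity (by linarith)
  obtain ⟨u, hu, v, hv, huv⟩ := mem_unif_prod (hUC hS)
  set u' := SetRel.symmetrize u with hu'def
  have hu' : u' ∈ uniformity (ℕ → Λ) := symmetrize_mem_uniformity hu
  filter_upwards [UniformSpace.ball_mem_nhds σ hu'] with ξ hξ
  -- (σ, ξ) ∈ u', hence (ξ, σ) ∈ u
  have hξσ : (ξ, σ) ∈ u := SetRel.symmetrize_subset_inv hξ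
  have hσξ : (σ, ξ) ∈ u := SetRel.symmetrize_subset_self hξ
  have hb : ∀ τ : ℕ → Λ, Bornology.IsBounded (Set.range (fcomp ω τ n)) :=
    fun τ => (isCompact_univ.isBounded).subset (subset_univ _)
  have key : ∀ τ₁ τ₂ : ℕ → Λ, (∀ x, dist (fcomp ω τ₁ n x) (fcomp ω τ₂ n x) ≤ ε / 3) →
      Metric.diam (Set.range (fcomp ω τ₁ n)) ≤
        Metric.diam (Set.range (fcomp ω τ₂ n)) + 2 * (ε / 3) := by
    intro τ₁ τ₂ h
    apply Metric.diam_le_of_forall_dist_le (by positivity)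
    rintro _ ⟨x, rfl⟩ _ ⟨y, rfl⟩
    calc dist (fcomp ω τ₁ n x) (fcomp ω τ₁ n y)
        ≤ dist (fcomp ω τ₁ n x) (fcomp ω τ₂ n x) + dist (fcomp ω τ₂ n x) (fcomp ω τ₂ n y)
          + dist (fcomp ω τ₂ n y) (fcomp ω τ₁ n y) := dist_triangle4 _ _ _ _
      _ ≤ ε / 3 + Metric.diam (Set.range (fcomp ω τ₂ n)) + ε / 3 := by
          gcongr
          · exact h x
          · exact Metric.dist_le_diam_of_mem (hb τ₂) ⟨x, rfl⟩ ⟨y, rfl⟩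
          · rw [dist_comm]; exact h y
      _ = Metric.diam (Set.range (fcomp ω τ₂ n)) + 2 * (ε / 3) := by ring
  have hpt : ∀ x : X, dist (fcomp ω ξ n x) (fcomp ω σ n x) ≤ ε / 3 := by
    intro x
    exact le_of_lt (huv ξ x σ x hξσ (refl_mem_uniformity hv) : _)
  have h1 := key ξ σ hpt
  have h2 := key σ ξ (fun x => by rw [dist_comm]; exact hpt x)
  rw [Real.dist_eq, abs_sub_lt_iff]
  constructor <;> linarith

lemma integrable_of_cont {α : Type*} [TopologicalSpace α] [CompactSpace α] [MeasurableSpace α]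
    [OpensMeasurableSpace α] (μ : MeasureTheory.Measure α) [IsFiniteMeasure μ] (g : α → ℝ)
    (hg : Continuous g) : MeasureTheory.Integrable g μ :=
  hg.integrable_of_hasCompactSupport (IsClosed.isCompact (isClosed_tsupport g))

end aux

set_option maxHeartbeats 1000000 in
theorem stmt8 {X Λ : Type*} [MetricSpace X] [CompactSpace X]
    [MeasurableSpace X] [BorelSpace X]
    [MetricSpace Λ] [CompactSpace Λ] [MeasurableSpace Λ] [BorelSpace Λ]
    (ω : Λ → X → X) (hω : Continuous fun q : Λ × X => ω q.1 q.2)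
    (ν : Measure (ℕ → Λ)) [IsProbabilityMeasure ν]
    (hinv : Measure.map shift ν = ν) (hF : ν (Fset ω) = 1)
    (μ1 μ2 : Measure ((ℕ → Λ) × X))
    [IsProbabilityMeasure μ1] [IsProbabilityMeasure μ2]
    (h1 : Measure.map (skew ω) μ1 = μ1) (h2 : Measure.map (skew ω) μ2 = μ2)
    (hp1 : Measure.map Prod.fst μ1 = ν) (hp2 : Measure.map Prod.fst μ2 = ν) :
    μ1 = μ2 := by
  -- nonemptiness
  have hne : Nonempty ((ℕ → Λ) × X) := by
    by_contra h
    rw [not_nonempty_iff] at h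
    have h0 : μ1 Set.univ = 1 := measure_univ
    rw [Set.univ_eq_empty_iff.mpr h, measure_empty] at h0
    exact zero_ne_one h0
  have hX : Nonempty X := ⟨hne.some.2⟩
  set x0 : X := hX.some with hx0
  -- measurability
  have mskew : Measurable (skew ω) := (continuous_skew hω).measurable
  have h1n : ∀ n, Measure.map ((skew ω)^[n]) μ1 = μ1 := by
    intro n
    induction n with
    | zero => simp
    | succ n ih =>
      rw [Function.iterate_succ', ← Measure.map_map mskew (mskew.iterate n), ih, h1]
  have h2n : ∀ n, Measure.map ((skew ω)^[n]) μ2 = μ2 := by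
    intro n
    induction n with
    | zero => simp
    | succ n ih =>
      rw [Function.iterate_succ', ← Measure.map_map mskew (mskew.iterate n), ih, h2]
  -- diameters
  set d : ℕ → (ℕ → Λ) → ℝ := fun n σ => Metric.diam (Set.range (fcomp ω σ n)) with hd
  have hdcont : ∀ n, Continuous (d n) := fun n => continuous_diam hω n
  have hd0 : ∀ n σ, 0 ≤ d n σ := fun n σ => Metric.diam_nonneg
  set B : ℝ := Metric.diam (Set.univ : Set X) with hB
  have hdB : ∀ n σ, d n σ ≤ B :=
    fun n σ => Metric.diam_mono (subset_univ _) isCompact_univ.isBounded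
  have hB0 : 0 ≤ B := Metric.diam_nonneg
  -- reduce to bounded continuous real functions
  suffices hkey : ∀ f : BoundedContinuousFunction ((ℕ → Λ) × X) ℝ,
      ∫ q, f q ∂μ1 = ∫ q, f q ∂μ2 by
    apply ext_of_forall_lintegral_eq_of_IsFiniteMeasure
    intro f
    obtain ⟨C, hC⟩ := f.map_bounded'
    set g : BoundedContinuousFunction ((ℕ → Λ) × X) ℝ :=
      ⟨⟨fun q => (f q : ℝ), NNReal.continuous_coe.comp f.continuous⟩, C, by
        intro x y
        rw [Real.dist_eq, ← NNReal.dist_eq]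
        exact hC x y⟩ with hg
    have e1 := BoundedContinuousFunction.toReal_lintegral_coe_eq_integral f μ1
    have e2 := BoundedContinuousFunction.toReal_lintegral_coe_eq_integral f μ2
    have hgk := hkey g
    have l1 := BoundedContinuousFunction.lintegral_lt_top_of_nnreal μ1 f
    have l2 := BoundedContinuousFunction.lintegral_lt_top_of_nnreal μ2 f
    rw [← ENNReal.toReal_eq_toReal_iff' l1.ne l2.ne, e1, e2]
    exact hgk
  intro f
  -- suffices to bound |Δ| by arbitrary ε
  suffices hbnd : ∀ ε > (0:ℝ), |∫ q, f q ∂μ1 - ∫ q, f q ∂μ2| ≤ 4 * ε by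
    by_contra hne'
    have habs : 0 < |∫ q, f q ∂μ1 - ∫ q, f q ∂μ2| :=
      abs_pos.mpr (sub_ne_zero.mpr hne')
    have := hbnd (|∫ q, f q ∂μ1 - ∫ q, f q ∂μ2| / 8) (by linarith)
    linarith
  intro ε hε
  -- uniform continuity of f in the second variable
  have hUCf : UniformContinuous (⇑f) :=
    CompactSpace.uniformContinuous_of_continuous f.continuous
  have hS : {p : ℝ × ℝ | dist p.1 p.2 < ε} ∈ uniformity ℝ := Metric.dist_mem_uniformity hε
  obtain ⟨u, hu, v, hv, huv⟩ := mem_unif_prod (hUCf hS)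
  obtain ⟨δ, hδ, hδv⟩ := Metric.mem_uniformity_dist.mp hv
  have hf2 : ∀ (s : ℕ → Λ) (x y : X), dist x y < δ → |f (s, x) - f (s, y)| < ε := by
    intro s x y hxy
    have hm := huv s x s y (refl_mem_uniformity hu) (hδv hxy)
    simpa [Real.dist_eq] using hm
  set C : ℝ := 2 * ‖f‖ / δ with hCdef
  have hC0 : 0 ≤ C := by positivity
  have hpt : ∀ (s : ℕ → Λ) (x y : X), |f (s, x) - f (s, y)| ≤ ε + C * dist x y := by
    intro s x y
    rcases lt_or_ge (dist x y) δ with h | h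
    · have h1 := le_of_lt (hf2 s x y h)
      nlinarith [dist_nonneg (x := x) (y := y)]
    · have h1 : |f (s, x) - f (s, y)| ≤ 2 * ‖f‖ := by
        have ha := f.norm_coe_le_norm (s, x)
        have hb := f.norm_coe_le_norm (s, y)
        rw [Real.norm_eq_abs] at ha hb
        calc |f (s, x) - f (s, y)| ≤ |f (s, x)| + |f (s, y)| := abs_sub _ _
          _ ≤ 2 * ‖f‖ := by linarith
      have h2 : 2 * ‖f‖ ≤ C * dist x y := by
        rw [hCdef, div_mul_eq_mul_div, le_div_iff₀ hδ]
        nlinarith [norm_nonneg f]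
      linarith
  -- choose n with small average diameter
  have hmeas : ∀ N : ℕ, Measurable fun σ : ℕ → Λ =>
      ((N : ℝ))⁻¹ * ∑ i ∈ Finset.range N, d (i + 1) σ := fun N =>
    (continuous_const.mul (continuous_finset_sum _ fun i _ => hdcont (i + 1))).measurable
  have haeF : ∀ᵐ σ ∂ν, σ ∈ Fset ω := by
    have hFm : MeasurableSet (Fset ω) := measurableSet_tendsto _ fun N => hmeas N
    rw [ae_iff]
    have h0 : ν (Fset ω)ᶜ = 0 := by
      rw [measure_compl hFm (measure_ne_top ν _), hF, measure_univ, tsub_self]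
    exact h0
  have htend : Tendsto (fun N : ℕ => ∫ σ, ((N : ℝ))⁻¹ * ∑ i ∈ Finset.range N, d (i + 1) σ ∂ν)
      atTop (nhds 0) := by
    have key := tendsto_integral_of_dominated_convergence (μ := ν)
      (F := fun N σ => ((N : ℝ))⁻¹ * ∑ i ∈ Finset.range N, d (i + 1) σ)
      (f := fun _ => (0 : ℝ)) (bound := fun _ => B)
      (fun N => (hmeas N).aestronglyMeasurable) (integrable_const B) ?_ ?_
    · simpa using key
    · intro N
      filter_upwards with σ
      rw [Real.norm_eq_abs, abs_of_nonneg]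
      · rcases Nat.eq_zero_or_pos N with h | h
        · simpa [h] using hB0
        · have hN : (0 : ℝ) < N := by exact_mod_cast h
          have hsum : ∑ i ∈ Finset.range N, d (i + 1) σ ≤ N * B := by
            calc ∑ i ∈ Finset.range N, d (i + 1) σ ≤ ∑ _i ∈ Finset.range N, B :=
                Finset.sum_le_sum fun i _ => hdB (i + 1) σ
              _ = N * B := by simp [mul_comm]
          calc ((N : ℝ))⁻¹ * ∑ i ∈ Finset.range N, d (i + 1) σ
              ≤ ((N : ℝ))⁻¹ * (N * B) := by
                apply mul_le_mul_of_nonneg_left hsum (by positivity)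
            _ = B := by field_simp
      · positivity
    · filter_upwards [haeF] with σ hσ
      exact hσ
  have hεC : (0 : ℝ) < ε / (C + 1) := by positivity
  obtain ⟨N, hN, hN1⟩ :=
    ((htend.eventually (gt_mem_nhds hεC)).and (eventually_ge_atTop 1)).exists
  -- extract a single n with small diameter integral
  have hintd : ∀ m, Integrable (d m) ν := fun m => integrable_of_cont ν (d m) (hdcont m)
  have hsplit : ∫ σ, ((N : ℝ))⁻¹ * ∑ i ∈ Finset.range N, d (i + 1) σ ∂ν
      = ((N : ℝ))⁻¹ * ∑ i ∈ Finset.range N, ∫ σ, d (i + 1) σ ∂ν := by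
    rw [integral_const_mul, integral_finset_sum _ fun i _ => hintd (i + 1)]
  obtain ⟨i, hiN, hi⟩ : ∃ i, i < N ∧ ∫ σ, d (i + 1) σ ∂ν < ε / (C + 1) := by
    by_contra hcon
    push_neg at hcon
    have hNpos : (0 : ℝ) < N := by exact_mod_cast hN1
    have hsum : (N : ℝ) * (ε / (C + 1)) ≤ ∑ i ∈ Finset.range N, ∫ σ, d (i + 1) σ ∂ν := by
      calc (N : ℝ) * (ε / (C + 1)) = ∑ _i ∈ Finset.range N, (ε / (C + 1)) := by simp [mul_comm]
        _ ≤ ∑ i ∈ Finset.range N, ∫ σ, d (i + 1) σ ∂ν :=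
          Finset.sum_le_sum fun i hi => hcon i (Finset.mem_range.mp hi)
    rw [hsplit] at hN
    have : ε / (C + 1) ≤ ((N : ℝ))⁻¹ * ∑ i ∈ Finset.range N, ∫ σ, d (i + 1) σ ∂ν := by
      calc ε / (C + 1) = ((N : ℝ))⁻¹ * ((N : ℝ) * (ε / (C + 1))) := by field_simp
        _ ≤ _ := mul_le_mul_of_nonneg_left hsum (by positivity)
    linarith
  set n : ℕ := i + 1 with hn
  have hsmall : ∫ σ, d n σ ∂ν < ε / (C + 1) := hi
  -- the comparison function
  set g : (ℕ → Λ) → ℝ := fun σ => f (shift^[n] σ, fcomp ω σ n x0) with hgdef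
  have hgcont : Continuous g := by
    apply f.continuous.comp
    exact (continuous_shift.iterate n).prodMk
      ((continuous_fcomp hω n).comp (continuous_id.prodMk continuous_const))
  have hcore : ∀ q : (ℕ → Λ) × X, |f ((skew ω)^[n] q) - g q.1| ≤ ε + C * d n q.1 := by
    intro q
    rw [skew_iterate]
    refine le_trans (hpt _ _ _) ?_
    have hdist : dist (fcomp ω q.1 n q.2) (fcomp ω q.1 n x0) ≤ d n q.1 :=
      Metric.dist_le_diam_of_mem ((isCompact_univ.isBounded).subset (subset_univ _))
        ⟨q.2, rfl⟩ ⟨x0, rfl⟩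
    have := mul_le_mul_of_nonneg_left hdist hC0
    linarith
  -- main estimate for each measure
  have est : ∀ (μ : Measure ((ℕ → Λ) × X)) [IsProbabilityMeasure μ],
      Measure.map ((skew ω)^[n]) μ = μ → Measure.map Prod.fst μ = ν →
      |∫ q, f q ∂μ - ∫ σ, g σ ∂ν| ≤ ε + C * ∫ σ, d n σ ∂ν := by
    intro μ _ hmap hproj
    have intf : Integrable (fun q => f ((skew ω)^[n] q)) μ :=
      integrable_of_cont μ _ (f.continuous.comp ((continuous_skew hω).iterate n))
    have intg : Integrable (fun q : (ℕ → Λ) × X => g q.1) μ :=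
      integrable_of_cont μ _ (hgcont.comp continuous_fst)
    have intd : Integrable (fun q : (ℕ → Λ) × X => d n q.1) μ :=
      integrable_of_cont μ _ ((hdcont n).comp continuous_fst)
    have e1 : ∫ q, f q ∂μ = ∫ q, f ((skew ω)^[n] q) ∂μ := by
      conv_lhs => rw [← hmap]
      rw [integral_map (mskew.iterate n).aemeasurable f.continuous.aestronglyMeasurable]
    have e2 : ∫ q, g q.1 ∂μ = ∫ σ, g σ ∂ν := by
      rw [← hproj, integral_map measurable_fst.aemeasurable hgcont.aestronglyMeasurable]
    have e3 : ∫ q, d n q.1 ∂μ = ∫ σ, d n σ ∂ν := by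
      rw [← hproj, integral_map measurable_fst.aemeasurable (hdcont n).aestronglyMeasurable]
    rw [e1, ← e2, ← integral_sub intf intg]
    calc |∫ q, (f ((skew ω)^[n] q) - g q.1) ∂μ|
        ≤ ∫ q, |f ((skew ω)^[n] q) - g q.1| ∂μ := by
          simpa [Real.norm_eq_abs] using
            norm_integral_le_integral_norm (fun q => f ((skew ω)^[n] q) - g q.1) (μ := μ)
      _ ≤ ∫ q, (ε + C * d n q.1) ∂μ :=
          integral_mono (intf.sub intg).abs ((integrable_const ε).add (intd.const_mul C))
            fun q => hcore q
      _ = ε + C * ∫ q, d n q.1 ∂μ := by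
          rw [integral_add (integrable_const ε) (intd.const_mul C), integral_const,
            integral_const_mul]
          simp
      _ = ε + C * ∫ σ, d n σ ∂ν := by rw [e3]
  have est1 := est μ1 (h1n n) hp1
  have est2 := est μ2 (h2n n) hp2
  have hCd : C * ∫ σ, d n σ ∂ν ≤ ε := by
    have h1' : C * ∫ σ, d n σ ∂ν ≤ C * (ε / (C + 1)) :=
      mul_le_mul_of_nonneg_left hsmall.le hC0
    have h2' : C * (ε / (C + 1)) ≤ ε := by
      rw [mul_div_assoc']
      rw [div_le_iff₀ (by positivity)]
      nlinarith
    linarith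
  calc |∫ q, f q ∂μ1 - ∫ q, f q ∂μ2|
      ≤ |∫ q, f q ∂μ1 - ∫ σ, g σ ∂ν| + |∫ σ, g σ ∂ν - ∫ q, f q ∂μ2| := abs_sub_le _ _ _
    _ ≤ (ε + C * ∫ σ, d n σ ∂ν) + (ε + C * ∫ σ, d n σ ∂ν) := by
        rw [abs_sub_comm (∫ σ, g σ ∂ν)]
        exact add_le_add est1 est2
    _ ≤ 4 * ε := by linarith
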